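/- Let G be a graph with maximum degree Δ, partially properly colored with colors from {1,…,Δ}, and let B_1,…,B_s be a partition of the uncolored vertices such that every vertex in B_i (i ≥ 2) has at least one neighbor in B_{i−1}, and every vertex of B_1 has an uncolored neighbor outside B_1 ∪ … ∪ B_s or a neighbor in B_0 (an uncolored set). Then for each i from s down to 1, assigning each v ∈ B_i the list L(v) = {1,…,Δ} minus the colors of its already-colored neighbors yields |L(v)| ≥ deg_{G[B_i]}(v) + 1; hence by greedy list coloring, all layers B_s,…,B_1 can be properly Δ-colored consistently with the existing partial coloring. -/

import Mathlib

open SimpleGraph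

def IsOddCycle {V : Type*} (G : SimpleGraph V) : Prop :=
  G.Connected ∧ (∀ v, (G.neighborSet v).ncard = 2) ∧ Odd (Nat.card V)

def TwoConnected {V : Type*} (G : SimpleGraph V) : Prop :=
  3 ≤ Nat.card V ∧ ∀ v : V, (G.induce {w : V | w ≠ v}).Connected

def DegreeChoosable {V : Type*} (G : SimpleGraph V) : Prop :=
  ∀ L : V → Finset ℕ, (∀ v, (G.neighborSet v).ncard ≤ (L v).card) →
    ∃ c : V → ℕ, (∀ v, c v ∈ L v) ∧ ∀ u w, G.Adj u w → c u ≠ c w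

def IsDCC {V : Type*} (G : SimpleGraph V) (S : Set V) : Prop :=
  TwoConnected (G.induce S) ∧ G.induce S ≠ ⊤ ∧ ¬ IsOddCycle (G.induce S)

def RadiusLE {V : Type*} (G : SimpleGraph V) (S : Set V) (r : ℕ) : Prop :=
  ∃ u : S, ∀ w : S, (G.induce S).dist u w ≤ r

def NoSmallDCC {V : Type*} (G : SimpleGraph V) (r : ℕ) : Prop :=
  ∀ S : Set V, IsDCC G S → ¬ RadiusLE G S r

def gball {V : Type*} (G : SimpleGraph V) (v : V) (r : ℕ) : Set V :=
  {u | G.Reachable v u ∧ G.dist v u ≤ r}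

noncomputable def childCount {V : Type*} (G : SimpleGraph V) (v u : V) : ℕ :=
  {w | G.Adj u w ∧ G.dist v w = G.dist v u + 1}.ncard


lemma exists_free_color (Δ : ℕ) (U : Finset ℕ) (h : U.card < Δ) :
    ∃ a, a < Δ ∧ a ∉ U := by
  have hne : (Finset.range Δ \ U).Nonempty := by
    rw [← Finset.card_pos]
    have := Finset.le_card_sdiff U (Finset.range Δ)
    rw [Finset.card_range] at this
    omega
  obtain ⟨a, ha⟩ := hne
  rw [Finset.mem_sdiff, Finset.mem_range] at ha
  exact ⟨a, ha.1, ha.2⟩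

lemma pick_color {V : Type*} [Fintype V] [DecidableEq V] (G : SimpleGraph V)
    [DecidableRel G.Adj] (Δ : ℕ)
    (hmax : ∀ v, (G.neighborSet v).ncard ≤ Δ)
    (c : V → Option ℕ) (v u : V) (hadj : G.Adj v u) (hu : c u = none) :
    ∃ a, a < Δ ∧ ∀ w, G.Adj v w → c w ≠ some a := by
  classical
  set U : Finset ℕ :=
    ((G.neighborFinset v).filter (fun w => (c w).isSome)).image (fun w => (c w).getD 0) with hU
  have hdeg : (G.neighborFinset v).card ≤ Δ := by
    have := hmax v
    rwa [Set.ncard_eq_toFinset_card'] at this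
  have humem : u ∈ G.neighborFinset v := by simp [hadj]
  have hsub : ((G.neighborFinset v).filter (fun w => (c w).isSome)) ⊆
      (G.neighborFinset v).erase u := by
    intro w hw
    rw [Finset.mem_filter] at hw
    refine Finset.mem_erase.2 ⟨?_, hw.1⟩
    rintro rfl; rw [hu] at hw; simp at hw
  have hcard : U.card < Δ := by
    have h1 : U.card ≤ ((G.neighborFinset v).filter (fun w => (c w).isSome)).card :=
      Finset.card_image_le
    have h2 := Finset.card_le_card hsub
    have h3 := Finset.card_erase_of_mem humem
    have h4 : 1 ≤ (G.neighborFinset v).card := Finset.card_pos.2 ⟨u, humem⟩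
    omega
  obtain ⟨a, ha, haU⟩ := exists_free_color Δ U hcard
  refine ⟨a, ha, fun w hw hcw => haU ?_⟩
  rw [hU]
  refine Finset.mem_image.2 ⟨w, ?_, by rw [hcw]; rfl⟩
  rw [Finset.mem_filter]
  exact ⟨by simp [hw], by rw [hcw]; rfl⟩

/-- Invariant during the coloring of layer `i`: everything proper and valid, layers
above `i` fully colored, the part of `B i` outside `T` colored, `T` and layers
`1..i-1` uncolored, and the coloring agrees with `c₀` outside all layers. -/
def GoodInner {V : Type*} (G : SimpleGraph V) (Δ s : ℕ) (c₀ : V → Option ℕ)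
    (B : ℕ → Set V) (i : ℕ) (T : Finset V) (c : V → Option ℕ) : Prop :=
  (∀ v a, c v = some a → a < Δ) ∧
  (∀ u w, G.Adj u w → c u = c w → c u = none) ∧
  (∀ v, (∀ j, 1 ≤ j → j ≤ s → v ∉ B j) → c v = c₀ v) ∧
  (∀ j, i < j → j ≤ s → ∀ v ∈ B j, ∃ a, c v = some a ∧ a < Δ) ∧
  (∀ v ∈ B i, v ∉ T → ∃ a, c v = some a ∧ a < Δ) ∧
  (∀ v ∈ T, c v = none) ∧
  (∀ j, 1 ≤ j → j ≤ i - 1 → ∀ v ∈ B j, c v = none)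

/-- Invariant between layers: layers `i+1..s` colored, layers `1..i` uncolored. -/
def GoodPartial {V : Type*} (G : SimpleGraph V) (Δ s : ℕ) (c₀ : V → Option ℕ)
    (B : ℕ → Set V) (i : ℕ) (c : V → Option ℕ) : Prop :=
  (∀ v a, c v = some a → a < Δ) ∧
  (∀ u w, G.Adj u w → c u = c w → c u = none) ∧
  (∀ v, (∀ j, 1 ≤ j → j ≤ s → v ∉ B j) → c v = c₀ v) ∧
  (∀ j, i < j → j ≤ s → ∀ v ∈ B j, ∃ a, c v = some a ∧ a < Δ) ∧
  (∀ j, 1 ≤ j → j ≤ i → ∀ v ∈ B j, c v = none)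

/-- Correctness of the layering technique: the uncolored layers B_s,…,B_1 can
be properly Δ-colored consistently with the existing partial coloring. -/
theorem stmt13 {V : Type*} [Fintype V] (G : SimpleGraph V) (Δ s : ℕ)
    (hmax : ∀ v, (G.neighborSet v).ncard ≤ Δ)
    (c₀ : V → Option ℕ)
    (hc₀col : ∀ v a, c₀ v = some a → a < Δ)
    (hc₀proper : ∀ u w, G.Adj u w → c₀ u = c₀ w → c₀ u = none)
    (B : ℕ → Set V)
    (huncol : ∀ i ≤ s, ∀ v ∈ B i, c₀ v = none)
    (hdisj : ∀ i ≤ s, ∀ j ≤ s, i ≠ j → Disjoint (B i) (B j))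
    (hlayer : ∀ i, 2 ≤ i → i ≤ s → ∀ v ∈ B i, ∃ u ∈ B (i - 1), G.Adj v u)
    (hbase : ∀ v ∈ B 1, ∃ u, G.Adj v u ∧ c₀ u = none ∧
        ∀ i, 1 ≤ i → i ≤ s → u ∉ B i) :
    ∃ c : V → Option ℕ,
      (∀ v a, c v = some a → a < Δ) ∧
      (∀ u w, G.Adj u w → c u = c w → c u = none) ∧
      (∀ v, (∀ i, 1 ≤ i → i ≤ s → v ∉ B i) → c v = c₀ v) ∧
      (∀ i, 1 ≤ i → i ≤ s → ∀ v ∈ B i, ∃ a, c v = some a ∧ a < Δ) := by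
    classical
  -- inner induction: color the remaining set T of layer i one vertex at a time
  have inner : ∀ n (i : ℕ), 1 ≤ i → i ≤ s → ∀ T : Finset V, T.card = n → ↑T ⊆ B i →
      ∀ c, GoodInner G Δ s c₀ B i T c → ∃ c', GoodInner G Δ s c₀ B i ∅ c' := by
    intro n
    induction n with
    | zero =>
      intro i _ _ T hT _ c hc
      rw [Finset.card_eq_zero] at hT
      exact ⟨c, hT ▸ hc⟩
    | succ n ih =>
      intro i hi1 his T hT hTB c hc
      obtain ⟨hcol, hprop, hout, habove, hdone, hunc, hbelow⟩ := hc
      have hTne : T.Nonempty := by rw [← Finset.card_pos, hT]; omega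
      obtain ⟨v, hvT⟩ := hTne
      have hvB : v ∈ B i := hTB hvT
      -- find an uncolored neighbor of v
      have hwit : ∃ u, G.Adj v u ∧ c u = none := by
        rcases eq_or_lt_of_le hi1 with h1 | h2
        · -- i = 1
          obtain ⟨u, hadj, hu0, hunotin⟩ := hbase v (by rw [← h1] at hvB; exact hvB)
          exact ⟨u, hadj, by rw [hout u hunotin]; exact hu0⟩
        · -- i ≥ 2
          obtain ⟨u, huB, hadj⟩ := hlayer i h2 his v hvB
          exact ⟨u, hadj, hbelow (i - 1) (by omega) le_rfl u huB⟩
      obtain ⟨u, hadj, hu⟩ := hwit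
      obtain ⟨a, haΔ, hafree⟩ := pick_color G Δ hmax c v u hadj hu
      set c' : V → Option ℕ := Function.update c v (some a) with hc'
      have hc'v : c' v = some a := Function.update_self v (some a) c
      have hc'ne : ∀ w, w ≠ v → c' w = c w := fun w hw => Function.update_of_ne hw _ c
      have hstep : GoodInner G Δ s c₀ B i (T.erase v) c' := by
        refine ⟨?_, ?_, ?_, ?_, ?_, ?_, ?_⟩
        · intro w b hwb
          by_cases hwv : w = v
          · subst hwv; rw [hc'v] at hwb
            injection hwb with h; omega
          · exact hcol w b (by rwa [hc'ne w hwv] at hwb)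
        · intro x y hxy hxyc
          by_cases hxv : x = v
          · have hyv : y ≠ v := by rintro rfl; exact G.irrefl (hxv ▸ hxy)
            rw [hxv, hc'v, hc'ne y hyv] at hxyc
            exact absurd hxyc.symm (hafree y (hxv ▸ hxy))
          · by_cases hyv : y = v
            · have hfr := hafree x (G.adj_symm (hyv ▸ hxy))
              rw [hc'ne x hxv, hyv, hc'v] at hxyc
              exact absurd hxyc hfr
            · rw [hc'ne x hxv, hc'ne y hyv] at hxyc
              rw [hc'ne x hxv]
              exact hprop x y hxy hxyc
        · intro w hw
          have hwv : w ≠ v := by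
            intro h; subst h; exact hw i hi1 his hvB
          rw [hc'ne w hwv]; exact hout w hw
        · intro j hj1 hj2 w hw
          by_cases hwv : w = v
          · subst hwv
            exact absurd hvB (fun h =>
              (hdisj i his j hj2 (by omega)).ne_of_mem h hw rfl)
          · rw [hc'ne w hwv]; exact habove j hj1 hj2 w hw
        · intro w hw hwT
          by_cases hwv : w = v
          · subst hwv; exact ⟨a, hc'v, haΔ⟩
          · rw [hc'ne w hwv]
            exact hdone w hw (fun h => hwT (Finset.mem_erase.2 ⟨hwv, h⟩))
        · intro w hw
          have := Finset.mem_erase.1 hw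
          rw [hc'ne w this.1]
          exact hunc w this.2
        · intro j hj1 hj2 w hw
          have hwv : w ≠ v := fun h =>
            (hdisj j (by omega) i his (by omega)).ne_of_mem hw hvB h
          rw [hc'ne w hwv]
          exact hbelow j hj1 hj2 w hw
      have hcard : (T.erase v).card = n := by
        rw [Finset.card_erase_of_mem hvT, hT]; omega
      exact ih i hi1 his (T.erase v) hcard
        (fun w hw => hTB (Finset.erase_subset v T hw)) c' hstep
  -- outer induction: process layers from s downward
  have outer : ∀ n, ∃ c, GoodPartial G Δ s c₀ B (s - n) c := by
    intro n
    induction n with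
    | zero =>
      refine ⟨c₀, hc₀col, hc₀proper, fun _ _ => rfl, ?_, ?_⟩
      · intro j hj1 hj2; omega
      · intro j hj1 hj2 v hv
        exact huncol j hj2 v hv
    | succ n ih =>
      obtain ⟨c, hcol, hprop, hout, habove, hbelow⟩ := ih
      by_cases h0 : s - n = 0
      · have : s - (n + 1) = 0 := by omega
        rw [this]
        exact ⟨c, hcol, hprop, hout, h0 ▸ habove, h0 ▸ hbelow⟩
      · set i := s - n with hi
        have hi1 : 1 ≤ i := by omega
        have his : i ≤ s := by omega
        set T : Finset V := (Set.toFinite (B i)).toFinset with hTdef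
        have hTB : ↑T = B i := Set.Finite.coe_toFinset _
        have hstart : GoodInner G Δ s c₀ B i T c := by
          refine ⟨hcol, hprop, hout, habove, ?_, ?_, ?_⟩
          · intro v hv hvT
            exact absurd ((Set.Finite.mem_toFinset _).2 hv) hvT
          · intro v hv
            exact hbelow i hi1 le_rfl v ((Set.Finite.mem_toFinset _).1 hv)
          · intro j hj1 hj2 v hv
            exact hbelow j hj1 (by omega) v hv
        obtain ⟨c', hcol', hprop', hout', habove', hdone', _, hbelow'⟩ :=
          inner T.card i hi1 his T rfl (hTB ▸ subset_rfl) c hstart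
        have hieq : s - (n + 1) = i - 1 := by omega
        rw [hieq]
        refine ⟨c', hcol', hprop', hout', ?_, ?_⟩
        · intro j hj1 hj2 v hv
          rcases eq_or_lt_of_le (show i ≤ j by omega) with h | h
          · exact hdone' v (h ▸ hv) (Finset.notMem_empty v)
          · exact habove' j h hj2 v hv
        · exact hbelow'
  obtain ⟨c, hcol, hprop, hout, habove, _⟩ := outer s
  refine ⟨c, hcol, hprop, hout, fun i hi1 hi2 v hv => ?_⟩
  exact habove i (by omega) hi2 v hv
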